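/- Let (B, 𝕋, ω) be a C*-dynamical system and suppose A is maximal among abelian 𝕋-invariant *-subalgebras of B. Then A is a maximal abelian subalgebra of B, i.e., A′ ∩ B = A. -/

import Mathlib

open Function in
lemma kleinecke {B : Type*} [CStarAlgebra B] (x : B)
    (h : x * (x * star x - star x * x) = (x * star x - star x * x) * x) :
    x * star x - star x * x = 0 := by
  set y := star x with hy
  set d : B := x * y - y * x with hdd
  set δ : B → B := fun z => x * z - z * x with hδ
  have hxd : x * d = d * x := h
  have hadd : ∀ (n : ℕ) (u v : B), δ^[n] (u + v) = δ^[n] u + δ^[n] v := by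
    intro n
    induction n with
    | zero => intro u v; simp
    | succ n ih =>
      intro u v
      rw [iterate_succ_apply, iterate_succ_apply, iterate_succ_apply,
        show δ (u + v) = δ u + δ v by simp only [hδ]; noncomm_ring]
      exact ih _ _
  have hδsmul : ∀ (c : ℕ) (z : B), δ (c • z) = c • δ z := by
    intro c z; simp only [hδ, smul_sub, mul_smul_comm, smul_mul_assoc]
  have hiter_dmul : ∀ (n : ℕ) (z : B), δ^[n] (d * z) = d * δ^[n] z := by
    intro n
    induction n with
    | zero => intro z; simp
    | succ n ih =>
      intro z
      rw [iterate_succ_apply, iterate_succ_apply,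
        show δ (d * z) = d * δ z by
          simp only [hδ, mul_sub]
          rw [← mul_assoc d x z, ← hxd, mul_assoc x d z, mul_assoc d z x]]
      exact ih (δ z)
  have hδdpow : ∀ m : ℕ, δ (d ^ m) = 0 := by
    intro m
    induction m with
    | zero => simp [hδ]
    | succ m ih =>
      rw [pow_succ']
      have := hiter_dmul 1 (d ^ m)
      simp only [iterate_one] at this
      rw [this, ih, mul_zero]
  have hδyw : ∀ w : B, δ (y * w) = y * δ w + d * w := by
    intro w; simp only [hδ, hdd]; noncomm_ring
  have hiter_ymul : ∀ (n : ℕ) (w : B),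
      δ^[n + 1] (y * w) = y * δ^[n + 1] w + (n + 1) • (d * δ^[n] w) := by
    intro n
    induction n with
    | zero => intro w; simpa using hδyw w
    | succ n ih =>
      intro w
      rw [iterate_succ_apply δ (n + 1) (y * w), hδyw, hadd, ih (δ w), hiter_dmul,
        ← iterate_succ_apply δ (n + 1) w, ← iterate_succ_apply δ n w]
      conv_rhs => rw [succ_nsmul]
      rw [add_assoc]
  have key : ∀ n : ℕ, δ^[n] (y ^ n) = (Nat.factorial n) • d ^ n := by
    intro n
    induction n with
    | zero => simp
    | succ n ih =>
      rw [pow_succ', hiter_ymul, iterate_succ_apply', ih, hδsmul, hδdpow, smul_zero,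
        mul_zero, zero_add, mul_smul_comm, ← pow_succ', smul_smul, ← Nat.factorial_succ]
  have hnδ : ∀ z : B, ‖δ z‖ ≤ 2 * ‖x‖ * ‖z‖ := by
    intro z
    calc ‖x * z - z * x‖ ≤ ‖x * z‖ + ‖z * x‖ := norm_sub_le _ _
      _ ≤ ‖x‖ * ‖z‖ + ‖z‖ * ‖x‖ := add_le_add (norm_mul_le _ _) (norm_mul_le _ _)
      _ = 2 * ‖x‖ * ‖z‖ := by ring
  have hniter : ∀ (n : ℕ) (z : B), ‖δ^[n] z‖ ≤ (2 * ‖x‖) ^ n * ‖z‖ := by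
    intro n
    induction n with
    | zero => intro z; simp
    | succ n ih =>
      intro z
      rw [iterate_succ_apply']
      calc ‖δ (δ^[n] z)‖ ≤ 2 * ‖x‖ * ‖δ^[n] z‖ := hnδ _
        _ ≤ 2 * ‖x‖ * ((2 * ‖x‖) ^ n * ‖z‖) :=
            mul_le_mul_of_nonneg_left (ih z) (by positivity)
        _ = (2 * ‖x‖) ^ (n + 1) * ‖z‖ := by ring
  have hbound : ∀ n : ℕ, 0 < n → (Nat.factorial n : ℝ) * ‖d ^ n‖ ≤ (2 * ‖x‖ * ‖y‖) ^ n := by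
    intro n hn
    have h1 : ‖δ^[n] (y ^ n)‖ ≤ (2 * ‖x‖) ^ n * ‖y‖ ^ n :=
      (hniter n (y ^ n)).trans
        (mul_le_mul_of_nonneg_left (norm_pow_le' y hn) (by positivity))
    rw [key n] at h1
    have h2 : ‖(Nat.factorial n) • d ^ n‖ = (Nat.factorial n : ℝ) * ‖d ^ n‖ := by
      rw [← Nat.cast_smul_eq_nsmul ℝ, norm_smul]
      simp
    rw [h2] at h1
    calc (Nat.factorial n : ℝ) * ‖d ^ n‖ ≤ (2 * ‖x‖) ^ n * ‖y‖ ^ n := h1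
      _ = (2 * ‖x‖ * ‖y‖) ^ n := by ring
  have hds : IsSelfAdjoint d := by
    rw [hdd, hy]
    simp only [IsSelfAdjoint, star_sub, star_mul, star_star]
  have hpow2 : ∀ k : ℕ, ‖d ^ (2 ^ k)‖ = ‖d‖ ^ (2 ^ k) := by
    intro k
    induction k with
    | zero => simp
    | succ k ih =>
      have hsa : IsSelfAdjoint (d ^ (2 ^ k)) := hds.pow _
      have hs : ‖d ^ (2 ^ k) * d ^ (2 ^ k)‖ = ‖d ^ (2 ^ k)‖ * ‖d ^ (2 ^ k)‖ := by
        conv_lhs =>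
          rw [show d ^ (2 ^ k) * d ^ (2 ^ k) = d ^ (2 ^ k) * star (d ^ (2 ^ k)) by rw [hsa]]
        exact CStarRing.norm_self_mul_star
      have e : d ^ (2 ^ (k + 1)) = d ^ (2 ^ k) * d ^ (2 ^ k) := by
        rw [pow_succ, pow_mul, sq]
      rw [e, hs, ih, ← pow_add]
      congr 1
      omega
  -- final contradiction
  by_contra hne
  have hd0 : (0:ℝ) < ‖d‖ := norm_pos_iff.mpr hne
  set q : ℝ := 2 * ‖x‖ * ‖y‖ / ‖d‖ with hq
  have hq0 : 0 ≤ q := by positivity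
  have h3 : ∀ k : ℕ, (Nat.factorial (2 ^ k) : ℝ) ≤ q ^ (2 ^ k) := by
    intro k
    have hb := hbound (2 ^ k) (by positivity)
    rw [hpow2 k] at hb
    rw [hq, div_pow, le_div_iff₀ (by positivity)]
    exact hb
  have h4 := FloorSemiring.tendsto_pow_div_factorial_atTop (K := ℝ) q
  obtain ⟨N, hN⟩ := Metric.tendsto_atTop.mp h4 1 one_pos
  have hNle : N ≤ 2 ^ N := Nat.le_of_lt (Nat.lt_two_pow_self)
  have h5 := hN (2 ^ N) hNle
  rw [Real.dist_eq, sub_zero] at h5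
  have hfacpos : (0:ℝ) < (Nat.factorial (2 ^ N) : ℝ) := by positivity
  have h6 : q ^ (2 ^ N) < (Nat.factorial (2 ^ N) : ℝ) := by
    have habs : |q ^ (2 ^ N) / (Nat.factorial (2 ^ N) : ℝ)| = q ^ (2 ^ N) / (Nat.factorial (2 ^ N) : ℝ) := by
      rw [abs_of_nonneg (by positivity)]
    rw [habs, div_lt_one hfacpos] at h5
    simpa using h5
  exact absurd (h3 N) (not_le.mpr h6)

namespace CircleAux
@[simp, norm_cast] lemma coe_pow (z : Circle) (n : ℕ) : ((z ^ n : Circle) : ℂ) = (z : ℂ) ^ n := by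
  induction n with
  | zero => simp
  | succ n ih => rw [pow_succ, pow_succ, Circle.coe_mul, ih]
@[simp, norm_cast] lemma coe_zpow (z : Circle) (n : ℤ) : ((z ^ n : Circle) : ℂ) = (z : ℂ) ^ n := by
  cases n with
  | ofNat m => simpa using coe_pow z m
  | negSucc m => simp [zpow_negSucc, Circle.coe_inv, coe_pow]

/-- the character `t ↦ t^n` as a continuous map. -/
noncomputable def chi (n : ℤ) : C(Circle, ℂ) :=
  ⟨fun t => ((t ^ n : Circle) : ℂ), by
    exact continuous_induced_dom.comp (continuous_zpow n)⟩

lemma chi_apply (n : ℤ) (t : Circle) : chi n t = ((t ^ n : Circle) : ℂ) := rfl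

lemma chi_mul (n m : ℤ) : chi n * chi m = chi (n + m) := by
  ext t; simp [chi_apply, zpow_add, Circle.coe_mul]

lemma chi_zero : chi 0 = 1 := by ext t; simp [chi_apply]

lemma star_chi (n : ℤ) : star (chi n) = chi (-n) := by
  ext t
  simp only [ContinuousMap.star_apply, chi_apply]
  rw [show (t ^ (-n) : Circle) = (t ^ n)⁻¹ by rw [zpow_neg], Circle.coe_inv_eq_conj]
  rfl

noncomputable def trigalg : StarSubalgebra ℂ C(Circle, ℂ) where
  carrier := (Submodule.span ℂ (Set.range chi) : Submodule ℂ C(Circle, ℂ))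
  mul_mem' := by
    intro p q hp hq
    induction hp using Submodule.span_induction generalizing q with
    | mem p hp =>
      obtain ⟨n, rfl⟩ := hp
      induction hq using Submodule.span_induction with
      | mem q hq =>
        obtain ⟨m, rfl⟩ := hq
        exact Submodule.subset_span ⟨n + m, (chi_mul n m).symm⟩
      | zero => simpa using Submodule.zero_mem _
      | add q r _ _ hq hr => rw [mul_add]; exact Submodule.add_mem _ hq hr
      | smul c q _ hq => rw [mul_smul_comm]; exact Submodule.smul_mem _ _ hq
    | zero => simpa using Submodule.zero_mem _
    | add p r _ _ hp hr => rw [add_mul]; exact Submodule.add_mem _ (hp hq) (hr hq)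
    | smul c p _ hp => rw [smul_mul_assoc]; exact Submodule.smul_mem _ _ (hp hq)
  one_mem' := Submodule.subset_span ⟨0, chi_zero⟩
  add_mem' := fun hp hq => Submodule.add_mem _ hp hq
  zero_mem' := Submodule.zero_mem _
  algebraMap_mem' := by
    intro c
    have : algebraMap ℂ C(Circle, ℂ) c = c • 1 := by
      rw [Algebra.algebraMap_eq_smul_one]
    rw [this]
    exact Submodule.smul_mem _ _ (Submodule.subset_span ⟨0, chi_zero⟩)
  star_mem' := by
    intro p hp
    induction hp using Submodule.span_induction with
    | mem p hp => obtain ⟨n, rfl⟩ := hp; exact Submodule.subset_span ⟨-n, (star_chi n).symm⟩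
    | zero => simpa using Submodule.zero_mem _
    | add p q _ _ hp hq => rw [star_add]; exact Submodule.add_mem _ hp hq
    | smul c p _ hp =>
      rw [star_smul]
      exact Submodule.smul_mem _ _ hp

lemma trigalg_dense : trigalg.topologicalClosure = ⊤ := by
  apply ContinuousMap.starSubalgebra_topologicalClosure_eq_top_of_separatesPoints
  intro t s hts
  refine ⟨_, ⟨chi 1, Submodule.subset_span ⟨1, rfl⟩, rfl⟩, ?_⟩
  simp only [chi_apply, zpow_one]
  exact fun h => hts (Circle.coe_injective h)

lemma exists_trig_near (ψ : C(Circle, ℂ)) {ε : ℝ} (hε : 0 < ε) :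
    ∃ p ∈ trigalg, ‖p - ψ‖ < ε := by
  have h1 : ψ ∈ trigalg.topologicalClosure := by rw [trigalg_dense]; trivial
  have h2 : ψ ∈ closure (trigalg : Set C(Circle, ℂ)) := h1
  rw [Metric.mem_closure_iff] at h2
  obtain ⟨p, hp, hdist⟩ := h2 ε hε
  exact ⟨p, hp, by rwa [← dist_eq_norm, dist_comm]⟩

end CircleAux


lemma mem_of_invariant {B : Type*} [CStarAlgebra B]
    (ω : Circle → B ≃⋆ₐ[ℂ] B)
    (hω : ∀ s t : Circle, ∀ b : B, ω (s * t) b = ω s (ω t b))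
    (A : StarSubalgebra ℂ B)
    (hab : ∀ a ∈ A, ∀ a' ∈ A, a * a' = a' * a)
    (hA : ∀ t : Circle, ∀ a ∈ A, ω t a ∈ A)
    (hmax : ∀ A' : StarSubalgebra ℂ B,
      (∀ a ∈ A', ∀ a' ∈ A', a * a' = a' * a) →
      (∀ t : Circle, ∀ a ∈ A', ω t a ∈ A') → A ≤ A' → A' = A)
    (x : B)
    (hxcomm : ∀ a ∈ A, a * x = x * a)
    (hnormal : x * star x = star x * x)
    (hinv : ∀ t : Circle, ∃ γ : ℂ, ω t x = γ • x) : x ∈ A := by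
  set S : Set B := (A : Set B) ∪ {x, star x} with hS
  have hSstar : ∀ u ∈ S, star u ∈ S := by
    rintro u (hu | rfl | rfl)
    · exact Or.inl (star_mem hu)
    · exact Or.inr (Or.inr rfl)
    · rw [star_star]; exact Or.inr (Or.inl rfl)
  have hgen : ∀ u ∈ S, ∀ v ∈ S, u * v = v * u := by
    have hax : ∀ a ∈ A, a * x = x * a := hxcomm
    have hax' : ∀ a ∈ A, a * star x = star x * a := by
      intro a ha
      have h := hxcomm (star a) (star_mem ha)
      calc a * star x = star (x * star a) := by simp [star_mul]
        _ = star (star a * x) := by rw [h]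
        _ = star x * a := by simp [star_mul]
    rintro u (hu | rfl | rfl) v (hv | rfl | rfl)
    · exact hab u hu v hv
    · exact hax u hu
    · exact hax' u hu
    · exact (hax v hv).symm
    · rfl
    · exact hnormal
    · exact (hax' v hv).symm
    · exact hnormal.symm
    · rfl
  set A' : StarSubalgebra ℂ B := StarAlgebra.adjoin ℂ S with hA'
  have hstep1 : ∀ z ∈ A', ∀ u ∈ S, u * z = z * u := by
    intro z hz
    induction hz using StarAlgebra.adjoin_induction with
    | mem w hw => exact fun u hu => hgen u hu w hw
    | algebraMap r => exact fun u hu => (Algebra.commutes r u).symm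
    | add w₁ w₂ h₁ h₂ ih₁ ih₂ =>
      intro u hu; rw [mul_add, add_mul, ih₁ u hu, ih₂ u hu]
    | mul w₁ w₂ h₁ h₂ ih₁ ih₂ =>
      intro u hu
      calc u * (w₁ * w₂) = (u * w₁) * w₂ := (mul_assoc _ _ _).symm
        _ = w₁ * (u * w₂) := by rw [ih₁ u hu, mul_assoc]
        _ = w₁ * w₂ * u := by rw [ih₂ u hu, mul_assoc]
    | star w hw ih =>
      intro u hu
      have h := ih (star u) (hSstar u hu)
      calc u * star w = star (w * star u) := by simp [star_mul]
        _ = star (star u * w) := by rw [h]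
        _ = star w * u := by simp [star_mul]
  have hcommA' : ∀ w ∈ A', ∀ z ∈ A', z * w = w * z := by
    intro w hw
    induction hw using StarAlgebra.adjoin_induction with
    | mem v hv => exact fun z hz => (hstep1 z hz v hv).symm
    | algebraMap r => exact fun z hz => (Algebra.commutes r z).symm
    | add w₁ w₂ h₁ h₂ ih₁ ih₂ =>
      intro z hz; rw [mul_add, add_mul, ih₁ z hz, ih₂ z hz]
    | mul w₁ w₂ h₁ h₂ ih₁ ih₂ =>
      intro z hz
      calc z * (w₁ * w₂) = (w₁ * z) * w₂ := by rw [← mul_assoc, ih₁ z hz]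
        _ = w₁ * (w₂ * z) := by rw [mul_assoc, ih₂ z hz]
        _ = w₁ * w₂ * z := (mul_assoc _ _ _).symm
    | star w hw ih =>
      intro z hz
      have h := ih (star z) (star_mem hz)
      calc z * star w = star (w * star z) := by simp [star_mul]
        _ = star (star z * w) := by rw [h]
        _ = star w * z := by simp [star_mul]
  -- invariance of A'
  have hA'inv : ∀ t : Circle, ∀ z ∈ A', ω t z ∈ A' := by
    intro t z hz
    induction hz using StarAlgebra.adjoin_induction with
    | mem w hw =>
      rcases hw with hw | rfl | rfl
      · exact StarAlgebra.subset_adjoin ℂ S (Or.inl (hA t w hw))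
      · obtain ⟨γ, hγ⟩ := hinv t
        rw [hγ]
        exact SMulMemClass.smul_mem γ (StarAlgebra.subset_adjoin ℂ S (Or.inr (Or.inl rfl)))
      · obtain ⟨γ, hγ⟩ := hinv t
        rw [map_star, hγ, star_smul]
        exact SMulMemClass.smul_mem _
          (star_mem (StarAlgebra.subset_adjoin ℂ S (Or.inr (Or.inl rfl))))
    | algebraMap r =>
      have : ω t (algebraMap ℂ B r) = algebraMap ℂ B r := by
        rw [Algebra.algebraMap_eq_smul_one, map_smul, map_one]
      rw [this]; exact algebraMap_mem _ r
    | add w₁ w₂ h₁ h₂ ih₁ ih₂ => rw [map_add]; exact add_mem ih₁ ih₂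
    | mul w₁ w₂ h₁ h₂ ih₁ ih₂ => rw [map_mul]; exact mul_mem ih₁ ih₂
    | star w hw ih => rw [map_star]; exact star_mem ih
  have hle : A ≤ A' := fun a ha => StarAlgebra.subset_adjoin ℂ S (Or.inl ha)
  have hEq : A' = A := hmax A' (fun a ha a' ha' => (hcommA' a' ha' a ha)) hA'inv hle
  rw [← hEq]
  exact StarAlgebra.subset_adjoin ℂ S (Or.inr (Or.inl rfl))


open MeasureTheory Function

noncomputable instance : MeasurableSpace Circle := borel Circle
instance : BorelSpace Circle := ⟨rfl⟩

/-- normalized Haar measure on the circle -/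
noncomputable abbrev μC : Measure Circle := Measure.haarMeasure ⊤

instance : IsProbabilityMeasure μC := by
  constructor
  have := Measure.haarMeasure_self (K₀ := (⊤ : TopologicalSpace.PositiveCompacts Circle))
  simpa using this

/-- Theorem 2.7 of Beggs–Goldstein: if `A` is maximal among abelian
`𝕋`-invariant *-subalgebras of a C*-dynamical system `(B, 𝕋, ω)`, then `A` is
maximal abelian in `B`, i.e. `A' ∩ B = A`. -/
theorem maximal_abelian_of_maximal_invariant_abelian
    {B : Type*} [CStarAlgebra B]
    (ω : Circle → B ≃⋆ₐ[ℂ] B)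
    (hω : ∀ s t : Circle, ∀ b : B, ω (s * t) b = ω s (ω t b))
    (hωcont : ∀ b : B, Continuous fun t : Circle => ω t b)
    (A : StarSubalgebra ℂ B)
    (hab : ∀ a ∈ A, ∀ a' ∈ A, a * a' = a' * a)
    (hA : ∀ t : Circle, ∀ a ∈ A, ω t a ∈ A)
    (hmax : ∀ A' : StarSubalgebra ℂ B,
      (∀ a ∈ A', ∀ a' ∈ A', a * a' = a' * a) →
      (∀ t : Circle, ∀ a ∈ A', ω t a ∈ A') → A ≤ A' → A' = A) :
    {b : B | ∀ a ∈ A, a * b = b * a} = (A : Set B) := by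
  classical
  -- basic facts about ω
  have hω1 : ∀ z : B, ω 1 z = z := by
    intro z
    have h := hω 1 1 z
    rw [one_mul] at h
    exact ((ω 1).injective h).symm
  have hωinv : ∀ (t : Circle) (z : B), ω t (ω t⁻¹ z) = z := by
    intro t z
    rw [← hω, mul_inv_cancel, hω1]
  have hiso : ∀ s : Circle, Isometry (ω s) := fun s => StarAlgEquiv.isometry (ω s)
  have hnormmap : ∀ (s : Circle) (z : B), ‖ω s z‖ = ‖z‖ := fun s z =>
    StarAlgEquiv.norm_map (ω s) z
  -- ω s as a continuous linear map
  let L : Circle → B →L[ℂ] B := fun s =>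
    { toFun := ω s
      map_add' := fun u v => map_add _ u v
      map_smul' := fun c u => map_smul _ c u
      cont := (hiso s).continuous }
  have hL : ∀ (s : Circle) (z : B), L s z = ω s z := fun _ _ => rfl
  -- A is closed
  have hclosure_comm : ∀ z ∈ closure (A : Set B), ∀ w ∈ closure (A : Set B), z * w = w * z := by
    intro z hz w hw
    have h1 : ∀ a ∈ A, a * z = z * a := by
      intro a ha
      have hcl : IsClosed {u : B | a * u = u * a} :=
        isClosed_eq (continuous_mul_left a) (continuous_mul_right a)
      exact (closure_minimal (fun u hu => hab a ha u hu) hcl) hz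
    have hcl : IsClosed {u : B | u * w = w * u} :=
      isClosed_eq (continuous_mul_right w) (continuous_mul_left w)
    refine (closure_minimal (fun a ha => ?_) hcl) hz
    have hcl2 : IsClosed {u : B | a * u = u * a} :=
      isClosed_eq (continuous_mul_left a) (continuous_mul_right a)
    exact (closure_minimal (fun u hu => hab a ha u hu) hcl2) hw
  have hAtc : A.topologicalClosure = A := by
    apply hmax
    · intro z hz w hw
      exact hclosure_comm z hz w hw
    · intro t a ha
      have h1 : ω t '' (A : Set B) ⊆ (A : Set B) := by
        rintro _ ⟨u, hu, rfl⟩; exact hA t u hu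
      have h2 : ω t a ∈ closure (ω t '' (A : Set B)) := by
        have := image_closure_subset_closure_image (f := ω t) (s := (A : Set B))
          (hiso t).continuous
        exact this ⟨a, ha, rfl⟩
      exact closure_mono h1 h2
    · exact A.le_topologicalClosure
  have hAclosed : IsClosed (A : Set B) := by
    have h1 : (A.topologicalClosure : Set B) = closure (A : Set B) := rfl
    have h2 : (A.topologicalClosure : Set B) = (A : Set B) := by rw [hAtc]
    rw [← h2] at *
    rw [h1]
    exact isClosed_closure
  -- the commutant K
  set K : Set B := {b : B | ∀ a ∈ A, a * b = b * a} with hKdef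
  have hKω : ∀ t : Circle, ∀ z ∈ K, ω t z ∈ K := by
    intro t z hz a haA
    have h1 : ω t⁻¹ a ∈ A := hA t⁻¹ a haA
    calc a * ω t z = ω t (ω t⁻¹ a) * ω t z := by rw [hωinv]
      _ = ω t (ω t⁻¹ a * z) := (map_mul _ _ _).symm
      _ = ω t (z * ω t⁻¹ a) := by rw [hz _ h1]
      _ = ω t z * a := by rw [map_mul, hωinv]
  have hKstar : ∀ z ∈ K, star z ∈ K := by
    intro z hz a ha
    have h := congrArg star (hz (star a) (star_mem ha))
    rw [star_mul, star_mul, star_star] at h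
    exact h.symm
  have hKmul : ∀ z ∈ K, ∀ w ∈ K, z * w ∈ K := by
    intro z hz w hw a ha
    calc a * (z * w) = (a * z) * w := (mul_assoc _ _ _).symm
      _ = z * (a * w) := by rw [hz a ha, mul_assoc]
      _ = z * w * a := by rw [hw a ha, mul_assoc]
  -- integrals of K-valued functions stay in K
  have hInt : ∀ f : Circle → B, Continuous f → Integrable f μC := fun f hf =>
    hf.integrable_of_hasCompactSupport (HasCompactSupport.of_compactSpace f)
  have hKint : ∀ f : Circle → B, Continuous f → (∀ t, f t ∈ K) → (∫ t, f t ∂μC) ∈ K := by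
    intro f hf hfK a ha
    have h1 := (ContinuousLinearMap.mul ℂ B a).integral_comp_comm (hInt f hf)
    have h2 := ((ContinuousLinearMap.mul ℂ B).flip a).integral_comp_comm (hInt f hf)
    simp only [ContinuousLinearMap.mul_apply', ContinuousLinearMap.flip_apply] at h1 h2
    calc a * ∫ t, f t ∂μC = ∫ t, a * f t ∂μC := h1.symm
      _ = ∫ t, f t * a ∂μC := by
          apply integral_congr_ae
          filter_upwards with t using hfK t a ha
      _ = (∫ t, f t ∂μC) * a := h2
  -- the two inclusions
  apply Set.Subset.antisymm
  · -- hard direction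
    intro b hb
    have hbK : b ∈ K := hb
    -- Fourier coefficients
    set bn : ℤ → B := fun n => ∫ t, ((t ^ (-n) : Circle) : ℂ) • ω t b ∂μC with hbn
    have hfncont : ∀ n : ℤ, Continuous fun t : Circle => ((t ^ (-n) : Circle) : ℂ) • ω t b :=
      fun n => (continuous_induced_dom.comp (continuous_zpow (G := Circle) (-n))).smul (hωcont b)
    have hbnK : ∀ n : ℤ, bn n ∈ K := by
      intro n
      apply hKint _ (hfncont n)
      intro t a ha
      have hz : ω t b ∈ K := hKω t b hbK
      calc a * (((t ^ (-n) : Circle) : ℂ) • ω t b)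
          = ((t ^ (-n) : Circle) : ℂ) • (a * ω t b) := mul_smul_comm _ _ _
        _ = ((t ^ (-n) : Circle) : ℂ) • (ω t b * a) := by rw [hz a ha]
        _ = (((t ^ (-n) : Circle) : ℂ) • ω t b) * a := (smul_mul_assoc _ _ _).symm
    have hbnω : ∀ (s : Circle) (n : ℤ), ω s (bn n) = ((s ^ n : Circle) : ℂ) • bn n := by
      intro s n
      have h1 : ω s (bn n) = ∫ t, ω s (((t ^ (-n) : Circle) : ℂ) • ω t b) ∂μC := by
        rw [hbn]
        have := (L s).integral_comp_comm (hInt _ (hfncont n))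
        simp only [hL] at this
        exact this.symm
      have h2 : (fun t : Circle => ω s (((t ^ (-n) : Circle) : ℂ) • ω t b))
          = fun t : Circle =>
            (fun u : Circle => (((s⁻¹ * u) ^ (-n) : Circle) : ℂ) • ω u b) (s * t) := by
        funext t
        have he : s⁻¹ * (s * t) = t := by group
        simp only [he, _root_.map_smul]
        rw [← hω]
      rw [h1, h2,
        integral_mul_left_eq_self (fun u : Circle => (((s⁻¹ * u) ^ (-n) : Circle) : ℂ) • ω u b) s]
      have h3 : (fun u : Circle => (((s⁻¹ * u) ^ (-n) : Circle) : ℂ) • ω u b)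
          = fun u : Circle => ((s ^ n : Circle) : ℂ) • (((u ^ (-n) : Circle) : ℂ) • ω u b) := by
        funext u
        rw [smul_smul, ← Circle.coe_mul]
        congr 2
        rw [mul_zpow, inv_zpow, ← zpow_neg, neg_neg]
      rw [h3, integral_smul]
    -- each Fourier coefficient lies in A
    have hbnA : ∀ n : ℤ, bn n ∈ A := by
      intro n
      have hstarK : star (bn n) ∈ K := hKstar _ (hbnK n)
      have hpK : bn n * star (bn n) ∈ K := hKmul _ (hbnK n) _ hstarK
      have hqK : star (bn n) * bn n ∈ K := hKmul _ hstarK _ (hbnK n)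
      have hωstar : ∀ s : Circle,
          ω s (star (bn n)) = ((s ^ (-n) : Circle) : ℂ) • star (bn n) := by
        intro s
        rw [map_star, hbnω s n, star_smul]
        congr 1
        rw [Complex.star_def, ← Circle.coe_inv_eq_conj, ← zpow_neg]
      have hcancel : ∀ s : Circle, ((s ^ n : Circle) : ℂ) * ((s ^ (-n) : Circle) : ℂ) = 1 := by
        intro s
        rw [← Circle.coe_mul, ← zpow_add, add_neg_cancel, zpow_zero, Circle.coe_one]
      have hcancel' : ∀ s : Circle, ((s ^ (-n) : Circle) : ℂ) * ((s ^ n : Circle) : ℂ) = 1 := by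
        intro s
        rw [mul_comm]; exact hcancel s
      have hsmulmul : ∀ (c d : ℂ) (z w : B), (c • z) * (d • w) = (c * d) • (z * w) := by
        intro c d z w
        rw [smul_mul_assoc, mul_smul_comm, smul_smul]
      have hpinv : ∀ s : Circle, ω s (bn n * star (bn n)) = bn n * star (bn n) := by
        intro s
        rw [map_mul, hbnω, hωstar, hsmulmul, hcancel, one_smul]
      have hqinv : ∀ s : Circle, ω s (star (bn n) * bn n) = star (bn n) * bn n := by
        intro s
        rw [map_mul, hbnω, hωstar, hsmulmul, hcancel', one_smul]
      have hpsa : star (bn n * star (bn n)) = bn n * star (bn n) := by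
        rw [star_mul, star_star]
      have hqsa : star (star (bn n) * bn n) = star (bn n) * bn n := by
        rw [star_mul, star_star]
      have hpA : bn n * star (bn n) ∈ A := by
        apply mem_of_invariant ω hω A hab hA hmax _ (fun a ha => hpK a ha)
        · rw [hpsa]
        · exact fun t => ⟨1, by rw [hpinv, one_smul]⟩
      have hqA : star (bn n) * bn n ∈ A := by
        apply mem_of_invariant ω hω A hab hA hmax _ (fun a ha => hqK a ha)
        · rw [hqsa]
        · exact fun t => ⟨1, by rw [hqinv, one_smul]⟩
      have hdA : bn n * star (bn n) - star (bn n) * bn n ∈ A := sub_mem hpA hqA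
      have hcd : bn n * (bn n * star (bn n) - star (bn n) * bn n)
          = (bn n * star (bn n) - star (bn n) * bn n) * bn n :=
        (hbnK n _ hdA).symm
      have hnormal : bn n * star (bn n) = star (bn n) * bn n :=
        sub_eq_zero.mp (kleinecke (bn n) hcd)
      exact mem_of_invariant ω hω A hab hA hmax (bn n) (fun a ha => hbnK n a ha) hnormal
        (fun t => ⟨((t ^ n : Circle) : ℂ), hbnω t n⟩)
    -- approximation of b by elements of A
    have hbmem : b ∈ closure (A : Set B) := by
      rw [Metric.mem_closure_iff]
      intro ε hε
      have hcont1 : ContinuousAt (fun t : Circle => ω t b) 1 := (hωcont b).continuousAt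
      obtain ⟨δ', hδ'pos, hδ'⟩ := Metric.continuousAt_iff.mp hcont1 (ε / 3) (by positivity)
      -- a bump function concentrated near 1
      set ψ0 : Circle → ℝ := fun t => max (δ' - dist t 1) 0 with hψ0
      have hψ0cont : Continuous ψ0 :=
        (continuous_const.sub (continuous_id.dist continuous_const)).max continuous_const
      have hψ0nonneg : ∀ t, 0 ≤ ψ0 t := fun t => le_max_right _ _
      have hψ0supp : ∀ t, ψ0 t ≠ 0 → dist t 1 < δ' := by
        intro t ht
        by_contra hge
        push_neg at hge
        exact ht (max_eq_right (by linarith))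
      have hψ0int : Integrable ψ0 μC :=
        hψ0cont.integrable_of_hasCompactSupport (HasCompactSupport.of_compactSpace _)
      have hIpos : 0 < ∫ t, ψ0 t ∂μC := by
        have hball : 0 < μC (Metric.ball (1 : Circle) (δ' / 2)) :=
          Metric.isOpen_ball.measure_pos μC (Metric.nonempty_ball.mpr (by positivity))
        have hlb : ∀ t ∈ Metric.ball (1 : Circle) (δ' / 2), δ' / 2 ≤ ψ0 t := by
          intro t ht
          rw [Metric.mem_ball] at ht
          exact le_trans (by linarith) (le_max_left _ _)
        calc (0:ℝ) < (δ' / 2) * (μC (Metric.ball (1 : Circle) (δ' / 2))).toReal := by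
              exact mul_pos (by positivity) (ENNReal.toReal_pos hball.ne' (measure_ne_top _ _))
          _ ≤ ∫ t in Metric.ball (1 : Circle) (δ' / 2), ψ0 t ∂μC :=
              by
                have := setIntegral_ge_of_const_le_real Metric.isOpen_ball.measurableSet
                  (measure_ne_top _ _) hlb hψ0int.integrableOn
                rw [measureReal_def] at this
                exact this
          _ ≤ ∫ t, ψ0 t ∂μC :=
              setIntegral_le_integral hψ0int (Filter.Eventually.of_forall hψ0nonneg)
      set I0 : ℝ := ∫ t, ψ0 t ∂μC with hI0
      set ψ : Circle → ℝ := fun t => ψ0 t / I0 with hψdef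
      have hψcont : Continuous ψ := hψ0cont.div_const _
      have hψnonneg : ∀ t, 0 ≤ ψ t := fun t => div_nonneg (hψ0nonneg t) hIpos.le
      have hψint : Integrable ψ μC :=
        hψcont.integrable_of_hasCompactSupport (HasCompactSupport.of_compactSpace _)
      have hψone : ∫ t, ψ t ∂μC = 1 := by
        simp only [hψdef, div_eq_mul_inv]
        rw [integral_mul_const, ← hI0, mul_inv_cancel₀ hIpos.ne']
      have hψsupp : ∀ t, ψ t ≠ 0 → dist t 1 < δ' := by
        intro t ht
        apply hψ0supp
        intro h0
        exact ht (by simp [hψdef, h0])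
      -- the averaged element
      have hsmooth : Continuous fun t : Circle => ((ψ t : ℂ)) • ω t b :=
        (Complex.continuous_ofReal.comp hψcont).smul (hωcont b)
      set Tψ : B := ∫ t, ((ψ t : ℂ)) • ω t b ∂μC with hTψdef
      have hTψb : ‖Tψ - b‖ ≤ ε / 3 := by
        have hconst : Continuous fun t : Circle => ((ψ t : ℂ)) • b :=
          (Complex.continuous_ofReal.comp hψcont).smul continuous_const
        have h1 : ∫ t, ((ψ t : ℂ)) • (ω t b - b) ∂μC = Tψ - b := by
          rw [show (fun t : Circle => ((ψ t : ℂ)) • (ω t b - b))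
              = fun t : Circle => ((ψ t : ℂ)) • ω t b - ((ψ t : ℂ)) • b from
            funext fun t => smul_sub _ _ _]
          rw [integral_sub (hInt _ hsmooth) (hInt (fun t => ((ψ t : ℂ)) • b) hconst),
            hTψdef]
          congr 1
          rw [integral_smul_const]
          have h3 : ∫ t, ((ψ t : ℝ) : ℂ) ∂μC = ((∫ t, ψ t ∂μC : ℝ) : ℂ) := integral_ofReal
          rw [h3, hψone, Complex.ofReal_one, one_smul]
        rw [← h1]
        have h3 : ∀ t, ‖((ψ t : ℂ)) • (ω t b - b)‖ ≤ ψ t * (ε / 3) := by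
          intro t
          rw [norm_smul, Complex.norm_real, Real.norm_eq_abs, abs_of_nonneg (hψnonneg t)]
          rcases eq_or_ne (ψ t) 0 with h0 | h0
          · simp [h0]
          · have hd := hδ' (hψsupp t h0)
            rw [hω1] at hd
            rw [dist_eq_norm] at hd
            exact mul_le_mul_of_nonneg_left hd.le (hψnonneg t)
        calc ‖∫ t, ((ψ t : ℂ)) • (ω t b - b) ∂μC‖
            ≤ ∫ t, ‖((ψ t : ℂ)) • (ω t b - b)‖ ∂μC := norm_integral_le_integral_norm _
          _ ≤ ∫ t, ψ t * (ε / 3) ∂μC := by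
              refine integral_mono ?_ (hψint.mul_const _) h3
              exact (hInt (fun t => ((ψ t : ℂ)) • (ω t b - b))
                ((Complex.continuous_ofReal.comp hψcont).smul
                  ((hωcont b).sub continuous_const))).norm
          _ = (∫ t, ψ t ∂μC) * (ε / 3) := integral_mul_const _ _
          _ = ε / 3 := by rw [hψone, one_mul]
      -- approximate ψ by a trigonometric polynomial
      set ψc : C(Circle, ℂ) := ⟨fun t => ((ψ t : ℂ)), Complex.continuous_ofReal.comp hψcont⟩
        with hψc
      have hεb : 0 < ε / (3 * (‖b‖ + 1)) := by positivity
      obtain ⟨p, hpV, hpnear⟩ := CircleAux.exists_trig_near ψc hεb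
      set Tp : B := ∫ t, p t • ω t b ∂μC with hTpdef
      have hTpA : Tp ∈ A := by
        have main : ∀ p' : C(Circle, ℂ), p' ∈ Submodule.span ℂ (Set.range CircleAux.chi) →
            (∫ t, p' t • ω t b ∂μC) ∈ A := by
          intro p' hp'
          induction hp' using Submodule.span_induction with
          | mem q hq =>
            obtain ⟨m, rfl⟩ := hq
            have he : (∫ t, CircleAux.chi m t • ω t b ∂μC) = bn (-m) := by
              rw [hbn]
              congr 1
              funext t
              rw [CircleAux.chi_apply]
              norm_num
            rw [he]
            exact hbnA (-m)
          | zero => simpa using zero_mem A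
          | add q r hq hr ihq ihr =>
            have he : (fun t => ((q + r) t) • ω t b)
                = fun t => q t • ω t b + r t • ω t b := by
              funext t
              rw [ContinuousMap.add_apply, add_smul]
            rw [he, integral_add (hInt (fun t => q t • ω t b) (q.continuous.smul (hωcont b)))
              (hInt (fun t => r t • ω t b) (r.continuous.smul (hωcont b)))]
            exact add_mem ihq ihr
          | smul c q hq ihq =>
            have he : (fun t => ((c • q) t) • ω t b) = fun t => c • (q t • ω t b) := by
              funext t
              rw [ContinuousMap.smul_apply, smul_eq_mul, ← smul_smul]
            rw [he, integral_smul]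
            exact SMulMemClass.smul_mem c ihq
        exact main p hpV
      refine ⟨Tp, hTpA, ?_⟩
      -- distance estimate
      have h5 : Tp - Tψ = ∫ t, (p t - ψc t) • ω t b ∂μC := by
        rw [hTpdef, hTψdef, ← integral_sub (hInt (fun t => p t • ω t b) (p.continuous.smul (hωcont b)))
          (hInt _ hsmooth)]
        congr 1
        funext t
        rw [sub_smul]
        rfl
      have h6 : ‖Tp - Tψ‖ ≤ ε / (3 * (‖b‖ + 1)) * ‖b‖ := by
        rw [h5]
        have h7 : ∀ t : Circle, ‖(p t - ψc t) • ω t b‖ ≤ ε / (3 * (‖b‖ + 1)) * ‖b‖ := by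
          intro t
          rw [norm_smul, hnormmap]
          have h8 : ‖p t - ψc t‖ ≤ ‖p - ψc‖ := by
            have := ContinuousMap.norm_coe_le_norm (p - ψc) t
            simpa using this
          exact mul_le_mul_of_nonneg_right (h8.trans hpnear.le) (norm_nonneg _)
        calc ‖∫ t, (p t - ψc t) • ω t b ∂μC‖
            ≤ ε / (3 * (‖b‖ + 1)) * ‖b‖ * (μC Set.univ).toReal :=
              norm_integral_le_of_norm_le_const (Filter.Eventually.of_forall h7)
          _ = ε / (3 * (‖b‖ + 1)) * ‖b‖ := by simp
      have h9 : ε / (3 * (‖b‖ + 1)) * ‖b‖ ≤ ε / 3 := by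
        rw [div_mul_eq_mul_div, div_le_div_iff₀ (by positivity) (by norm_num)]
        have hb1 : ‖b‖ ≤ ‖b‖ + 1 := by linarith
        calc ε * ‖b‖ * 3 ≤ ε * (‖b‖ + 1) * 3 := by nlinarith [norm_nonneg b, hε.le]
          _ = ε * (3 * (‖b‖ + 1)) := by ring
      have hfinal : dist b Tp < ε := by
        have : dist b Tp ≤ ‖Tψ - b‖ + ‖Tp - Tψ‖ := by
          rw [dist_eq_norm]
          calc ‖b - Tp‖ = ‖(b - Tψ) + (Tψ - Tp)‖ := by rw [sub_add_sub_cancel]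
            _ ≤ ‖b - Tψ‖ + ‖Tψ - Tp‖ := norm_add_le _ _
            _ = ‖Tψ - b‖ + ‖Tp - Tψ‖ := by rw [norm_sub_rev b Tψ, norm_sub_rev Tψ Tp]
        have hlt : ‖Tψ - b‖ + ‖Tp - Tψ‖ ≤ ε / 3 + ε / 3 :=
          add_le_add hTψb (h6.trans h9)
        linarith
      exact hfinal
    rw [hAclosed.closure_eq] at hbmem
    exact hbmem
  · intro a' ha' a ha
    exact hab a ha a' ha'
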